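/- The first prolongation of co(V) is V*: if dim V ≥ 3 and S : V × V → V is a symmetric bilinear map such that for every X ∈ V the endomorphism Y ↦ S(X,Y) lies in co(V) (i.e. there is λ(X) ∈ ℝ with g(S(X,Y),Z) + g(Y,S(X,Z)) = 2λ(X)g(Y,Z) for all Y,Z), then there exists a linear form ξ ∈ V* such that S(X,Y) = ξ(X)Y + ξ(Y)X − g(X,Y)ξ♯ for all X,Y ∈ V. -/

import Mathlib

/-- The first prolongation of `co(V)` is `V*` (for `dim V ≥ 3`): a symmetric bilinear map
`S : V × V → V` all of whose partial maps `Y ↦ S(X,Y)` lie in `co(V)` is of the form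
`S(X,Y) = ξ(X)Y + ξ(Y)X − g(X,Y)ξ♯` for some 1-form `ξ = g(s,·)` with `ξ♯ = s`. -/
theorem first_prolongation_of_co_eq_dual
    {V : Type*} [AddCommGroup V] [Module ℝ V] [FiniteDimensional ℝ V]
    (g : LinearMap.BilinForm ℝ V) (hsymm : g.IsSymm) (hnd : g.Nondegenerate)
    (hdim : 3 ≤ Module.finrank ℝ V)
    (S : V →ₗ[ℝ] V →ₗ[ℝ] V)
    (hSsymm : ∀ X Y : V, S X Y = S Y X)
    (hconf : ∀ X : V, ∃ c : ℝ, ∀ Y Z : V, g (S X Y) Z + g Y (S X Z) = 2 * c * g Y Z) :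
    ∃ s : V, ∀ X Y : V, S X Y = g s X • Y + g s Y • X - g X Y • s := by
  have hnt : Nontrivial V := by
    have : 0 < Module.finrank ℝ V := by omega
    exact Module.nontrivial_of_finrank_pos this
  -- a pair with g Y₀ Z₀ ≠ 0
  obtain ⟨Y₀, Z₀, h0⟩ : ∃ Y Z : V, g Y Z ≠ 0 := by
    by_contra h
    push_neg at h
    obtain ⟨y, hy⟩ := exists_ne (0 : V)
    exact hy (hnd.1 y fun z => h y z)
  -- the linear functional ξ
  set ξ : V →ₗ[ℝ] ℝ :=
    (2 * g Y₀ Z₀)⁻¹ • (((g.flip Z₀).comp (S.flip Y₀)) + ((g Y₀).comp (S.flip Z₀))) with hξdef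
  have hξ : ∀ X Y Z : V, g (S X Y) Z + g Y (S X Z) = 2 * ξ X * g Y Z := by
    intro X
    obtain ⟨c, hc⟩ := hconf X
    have hcX : ξ X = c := by
      have h1 := hc Y₀ Z₀
      have h2 : ξ X = (2 * g Y₀ Z₀)⁻¹ * (g (S X Y₀) Z₀ + g Y₀ (S X Z₀)) := rfl
      rw [h1] at h2
      have h3 : ξ X * (2 * g Y₀ Z₀) = c * (2 * g Y₀ Z₀) := by rw [h2]; field_simp
      exact mul_right_cancel₀ (mul_ne_zero two_ne_zero h0) h3
    intro Y Z
    rw [hcX]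
    exact hc Y Z
  have gs : ∀ x y : V, g x y = g y x := fun x y => hsymm.eq x y
  -- the vector s with g s = ξ
  refine ⟨(g.toDual hnd).symm ξ, ?_⟩
  have hs : ∀ X : V, g ((g.toDual hnd).symm ξ) X = ξ X := by
    intro X
    have h := LinearEquiv.apply_symm_apply (g.toDual hnd) ξ
    calc g ((g.toDual hnd).symm ξ) X
        = (g.toDual hnd) ((g.toDual hnd).symm ξ) X := (LinearMap.BilinForm.toDual_def hnd).symm
      _ = ξ X := by rw [h]
  set s : V := (g.toDual hnd).symm ξ
  -- the trilinear defect
  set A : V → V → V → ℝ := fun X Y Z =>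
    g (S X Y - (ξ X • Y + ξ Y • X - g X Y • s)) Z with hAdef
  have hAexp : ∀ X Y Z : V,
      A X Y Z = g (S X Y) Z - ξ X * g Y Z - ξ Y * g X Z + g X Y * ξ Z := by
    intro X Y Z
    simp only [hAdef, map_sub, map_add, map_smul, LinearMap.sub_apply, LinearMap.add_apply,
      LinearMap.smul_apply, smul_eq_mul, hs]
    ring
  have hAsymm : ∀ X Y Z : V, A X Y Z = A Y X Z := by
    intro X Y Z
    rw [hAexp, hAexp, hSsymm X Y, gs X Y]
    ring
  have hAskew : ∀ X Y Z : V, A X Y Z = - A X Z Y := by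
    intro X Y Z
    rw [hAexp, hAexp]
    have h1 : g (S X Z) Y = g Y (S X Z) := gs _ _
    have h2 := hξ X Y Z
    have h3 : g Z Y = g Y Z := gs _ _
    rw [h1]
    linear_combination h2 - ξ X * h3
  have hA0 : ∀ X Y Z : V, A X Y Z = 0 := by
    intro X Y Z
    have : A X Y Z = - A X Y Z := by
      calc A X Y Z = A Y X Z := hAsymm X Y Z
        _ = - A Y Z X := hAskew Y X Z
        _ = - A Z Y X := by rw [hAsymm Y Z X]
        _ = A Z X Y := by rw [hAskew Z Y X, neg_neg]
        _ = A X Z Y := hAsymm Z X Y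
        _ = - A X Y Z := by rw [hAskew X Z Y]
    linarith
  intro X Y
  have := hnd.1 (S X Y - (ξ X • Y + ξ Y • X - g X Y • s)) (fun Z => hA0 X Y Z)
  have h := sub_eq_zero.mp this
  rw [h, hs X, hs Y]
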